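/- Let λ > 1 and q ∈ ℕ with q ≥ 1, set f(t) = arcsin(λ^t/√(1+λ^{2t})) − arcsin(1/√(1+λ^{2t})), and for κ ≥ 1 put π(κ) = (2·f(κq) − f((κ−1)q) − f((κ+1)q))/f(q). Then lim_{κ→∞} π(κ+1)/π(κ) = λ^{−q}. -/

import Mathlib

open Filter Topology

noncomputable section

/-- `f(t) = arcsin(λ^t/√(1+λ^{2t})) − arcsin(1/√(1+λ^{2t}))`. -/
def fArc (lam : ℝ) (t : ℕ) : ℝ :=
  Real.arcsin (lam ^ t / Real.sqrt (1 + lam ^ (2 * t))) -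
    Real.arcsin (1 / Real.sqrt (1 + lam ^ (2 * t)))

/-- The multiplicity distribution of the limiting compound Poisson process at a
periodic point of prime period `q`, for the Euclidean metric. -/
def multDist (lam : ℝ) (q κ : ℕ) : ℝ :=
  (2 * fArc lam (κ * q) - fArc lam ((κ - 1) * q) - fArc lam ((κ + 1) * q)) /
    fArc lam q

lemma arcsin_inv_sqrt_aux (y : ℝ) (hy : 0 < y) :
    Real.arcsin (1 / Real.sqrt (1 + y ^ 2)) = Real.arctan y⁻¹ := by
  rw [Real.arctan_eq_arcsin]
  congr 1
  have hy0 : y ≠ 0 := hy.ne'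
  have h1 : (1 : ℝ) + (y⁻¹) ^ 2 = (1 + y ^ 2) / y ^ 2 := by
    field_simp
    ring
  have h2 : Real.sqrt ((1 + y ^ 2) / y ^ 2) = Real.sqrt (1 + y ^ 2) / y := by
    rw [Real.sqrt_div (by positivity), Real.sqrt_sq hy.le]
  have hs : Real.sqrt (1 + y ^ 2) ≠ 0 := by positivity
  rw [h1, h2]
  field_simp

lemma fArc_eq (lam : ℝ) (hlam : 1 < lam) (t : ℕ) :
    fArc lam t = Real.pi / 2 - 2 * Real.arctan ((lam ^ t)⁻¹) := by
  have hy : 0 < lam ^ t := pow_pos (by linarith) t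
  have h2t : lam ^ (2 * t) = (lam ^ t) ^ 2 := by rw [mul_comm, pow_mul]
  unfold fArc
  rw [h2t, ← Real.arctan_eq_arcsin, arcsin_inv_sqrt_aux _ hy,
    Real.arctan_inv_of_pos hy]
  ring

lemma div_div_div_same_aux (A B c : ℝ) (hc : c ≠ 0) : (A / c) / (B / c) = A / B := by
  rcases eq_or_ne B 0 with hB | hB
  · simp [hB]
  · field_simp

lemma frac_split_aux (A B a b : ℝ) (ha : a ≠ 0) (hb : b ≠ 0) :
    A / B = (A / a) / (B / b) * (a / b) := by
  rcases eq_or_ne B 0 with hB | hB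
  · simp [hB]
  · field_simp

/-- the multiplicity distribution `π` has geometric tail ratio:
`π(κ+1)/π(κ) → λ^{-q}` as `κ → ∞`. -/
theorem multDist_tail_ratio
    (lam : ℝ) (hlam : 1 < lam) (q : ℕ) (hq : 1 ≤ q) :
    Tendsto (fun κ : ℕ => multDist lam q (κ + 1) / multDist lam q κ) atTop
      (𝓝 ((lam ^ q)⁻¹)) := by
  have hlam0 : (0 : ℝ) < lam := by linarith
  set r : ℝ := lam ^ q with hrdef
  have hr : 1 < r := one_lt_pow₀ hlam (by omega)
  have hr0 : 0 < r := by linarith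
  set h : ℝ → ℝ := fun x =>
    2 * Real.arctan (r * x) + 2 * Real.arctan (r⁻¹ * x) - 4 * Real.arctan x with hhdef
  set c : ℝ := 2 * r + 2 * r⁻¹ - 4 with hcdef
  have hcpos : 0 < c := by
    have hceq : c = 2 * (r - 1) ^ 2 / r := by
      rw [hcdef]; field_simp; ring
    have h1 : (0:ℝ) < r - 1 := by linarith
    rw [hceq]
    positivity
  -- derivative of h at 0
  have hderiv : HasDerivAt h c 0 := by
    have h1 : HasDerivAt (fun x : ℝ => Real.arctan (r * x)) r 0 := by
      have := (Real.hasDerivAt_arctan (r * 0)).comp 0 ((hasDerivAt_id 0).const_mul r)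
      simpa [Function.comp_def] using this
    have h2 : HasDerivAt (fun x : ℝ => Real.arctan (r⁻¹ * x)) r⁻¹ 0 := by
      have := (Real.hasDerivAt_arctan (r⁻¹ * 0)).comp 0 ((hasDerivAt_id 0).const_mul r⁻¹)
      simpa [Function.comp_def] using this
    have h3 : HasDerivAt (fun x : ℝ => Real.arctan x) 1 0 := by
      simpa using Real.hasDerivAt_arctan 0
    have := ((h1.const_mul 2).add (h2.const_mul 2)).sub (h3.const_mul 4)
    rw [hhdef, hcdef]
    exact this.congr_deriv (by ring)
  have h0 : h 0 = 0 := by simp [hhdef]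
  have hslope : Tendsto (fun x : ℝ => h x / x) (𝓝[≠] (0:ℝ)) (𝓝 c) := by
    have hs := hasDerivAt_iff_tendsto_slope.mp hderiv
    refine hs.congr fun x => ?_
    simp [slope_def_field, h0, div_eq_mul_inv]
  -- the sequence X κ = r^{-κ}
  set X : ℕ → ℝ := fun κ => (r ^ κ)⁻¹ with hXdef
  have hXpos : ∀ κ, 0 < X κ := fun κ => by positivity
  have hX0 : Tendsto X atTop (𝓝 0) := by
    have : X = fun κ => (r⁻¹) ^ κ := by
      funext κ; rw [hXdef, inv_pow]
    rw [this]
    exact tendsto_pow_atTop_nhds_zero_of_lt_one (by positivity) (by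
      rw [inv_lt_one_iff₀]; right; exact hr)
  have hX : Tendsto X atTop (𝓝[≠] (0:ℝ)) :=
    tendsto_nhdsWithin_of_tendsto_nhds_of_eventually_within _ hX0
      (Eventually.of_forall fun κ => (hXpos κ).ne')
  set φ : ℕ → ℝ := fun κ => h (X κ) / X κ with hφdef
  have hφ : Tendsto φ atTop (𝓝 c) := hslope.comp hX
  have hφ' : Tendsto (fun κ => φ (κ + 1)) atTop (𝓝 c) :=
    hφ.comp (tendsto_add_atTop_nat 1)
  have hmain : Tendsto (fun κ => φ (κ + 1) / φ κ * r⁻¹) atTop (𝓝 (c / c * r⁻¹)) :=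
    (hφ'.div hφ hcpos.ne').mul_const r⁻¹
  rw [div_self hcpos.ne', one_mul] at hmain
  -- identify the power
  have hpow : ∀ m : ℕ, (lam ^ (m * q) : ℝ) = r ^ m := fun m => by
    rw [hrdef, ← pow_mul, mul_comm]
  -- numerator equals h (X κ) for κ ≥ 1
  have hN : ∀ κ : ℕ, 1 ≤ κ →
      2 * fArc lam (κ * q) - fArc lam ((κ - 1) * q) - fArc lam ((κ + 1) * q)
        = h (X κ) := by
    intro κ hκ
    obtain ⟨j, rfl⟩ : ∃ j, κ = j + 1 := ⟨κ - 1, by omega⟩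
    have e1 : (j + 1 - 1) * q = j * q := by simp
    rw [e1, fArc_eq lam hlam, fArc_eq lam hlam, fArc_eq lam hlam]
    have hrj : (r ^ j : ℝ) ≠ 0 := (pow_pos hr0 j).ne'
    have A : (lam ^ ((j + 1) * q))⁻¹ = X (j + 1) := by rw [hpow]
    have B : (lam ^ (j * q))⁻¹ = r * X (j + 1) := by
      rw [hpow]
      simp only [hXdef, pow_succ, mul_inv]
      rw [mul_comm ((r : ℝ) ^ j)⁻¹ r⁻¹, ← mul_assoc, mul_inv_cancel₀ hr0.ne', one_mul]
    have C : (lam ^ ((j + 1 + 1) * q))⁻¹ = r⁻¹ * X (j + 1) := by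
      rw [hpow]
      simp only [hXdef, pow_succ, mul_inv]
      ring
    rw [A, B, C, hhdef]
    ring
  -- f(q) ≠ 0
  have hfq : 0 < fArc lam q := by
    rw [fArc_eq lam hlam q, ← hrdef]
    have h1 : Real.arctan r⁻¹ < Real.arctan 1 :=
      Real.arctan_strictMono (by rw [inv_lt_one_iff₀]; right; exact hr)
    rw [Real.arctan_one] at h1
    have hpi : 0 < Real.pi := Real.pi_pos
    linarith
  -- eventual equality of the two ratio sequences
  refine hmain.congr' ?_
  filter_upwards [eventually_ge_atTop 1] with κ hκ
  have hXκ := (hXpos κ).ne'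
  have hXκ1 := (hXpos (κ + 1)).ne'
  have hrκ : (r ^ κ : ℝ) ≠ 0 := (pow_pos hr0 κ).ne'
  have hab : X (κ + 1) / X κ = r⁻¹ := by
    simp only [hXdef, pow_succ, mul_inv]
    field_simp
  have hmd : ∀ m : ℕ, 1 ≤ m → multDist lam q m = h (X m) / fArc lam q := by
    intro m hm
    rw [multDist, hN m hm]
  rw [hmd κ hκ, hmd (κ + 1) (by omega), div_div_div_same_aux _ _ _ hfq.ne',
    frac_split_aux (h (X (κ + 1))) (h (X κ)) (X (κ + 1)) (X κ) hXκ1 hXκ, hab]
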